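/- Let γ ∈ [0,1), c ≥ 0, a > 0, and set α_i = a/√(i+1) for i ≥ 0. If (q_i)_{i≥0} is a sequence of nonnegative reals satisfying q_i ≤ γ q_{i−1} + c α_{i−1} for every i ≥ 1, then for every t ≥ 1, (1/t) Σ_{i=0}^{t−1} q_i ≤ 2 c a / ((1 − γ) √t) + q₀ / ((1 − γ) t). -/

import Mathlib

lemma sum_inv_sqrt_le (n : ℕ) :
    ∑ i ∈ Finset.range n, 1 / Real.sqrt (i + 1) ≤ 2 * Real.sqrt n := by
  induction n with
  | zero => simp
  | succ n ih =>
    rw [Finset.sum_range_succ]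
    have h1 : Real.sqrt n ^ 2 = n := Real.sq_sqrt (by positivity)
    have h2 : Real.sqrt (n + 1) ^ 2 = (n : ℝ) + 1 := Real.sq_sqrt (by positivity)
    have h3 : (0:ℝ) ≤ Real.sqrt n := Real.sqrt_nonneg _
    have h4 : (0:ℝ) < Real.sqrt (n + 1) := Real.sqrt_pos.mpr (by positivity)
    have key : 1 / Real.sqrt ((n:ℝ) + 1) ≤ 2 * Real.sqrt (n + 1) - 2 * Real.sqrt n := by
      rw [div_le_iff₀ h4]
      nlinarith [sq_nonneg (Real.sqrt n - Real.sqrt (n+1))]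
    push_cast
    push_cast at ih key
    linarith

theorem average_contraction_sqrt_rate
    (γ c a : ℝ) (hγ0 : 0 ≤ γ) (hγ1 : γ < 1) (hc : 0 ≤ c) (ha : 0 < a)
    (q : ℕ → ℝ) (hq : ∀ i, 0 ≤ q i)
    (hrec : ∀ i : ℕ, q (i + 1) ≤ γ * q i + c * (a / Real.sqrt (i + 1))) :
    ∀ t : ℕ, 1 ≤ t →
      (1 / (t : ℝ)) * ∑ i ∈ Finset.range t, q i ≤
        2 * c * a / ((1 - γ) * Real.sqrt t) + q 0 / ((1 - γ) * t) := by
  intro t ht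
  have hγ : (0:ℝ) < 1 - γ := by linarith
  set S : ℕ → ℝ := fun n => ∑ i ∈ Finset.range n, q i with hS
  have hSnn : ∀ n, 0 ≤ S n := fun n => Finset.sum_nonneg fun i _ => hq i
  have hSmono : S (t - 1) ≤ S t := by
    apply Finset.sum_le_sum_of_subset_of_nonneg
    · exact Finset.range_subset_range.mpr (Nat.sub_le t 1)
    · exact fun i _ _ => hq i
  -- key recursion summed
  have hts : t - 1 + 1 = t := Nat.succ_pred_eq_of_pos ht
  have hsum : S t ≤ q 0 + γ * S (t - 1) + c * a * (2 * Real.sqrt (t - 1 : ℕ)) := by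
    have : S t = (∑ i ∈ Finset.range (t - 1), q (i + 1)) + q 0 := by
      rw [hS]
      conv_lhs => rw [← hts]
      exact Finset.sum_range_succ' q (t - 1)
    rw [this]
    have hb : (∑ i ∈ Finset.range (t - 1), q (i + 1)) ≤
        γ * S (t - 1) + c * a * ∑ i ∈ Finset.range (t - 1), 1 / Real.sqrt (i + 1) := by
      rw [hS, Finset.mul_sum, Finset.mul_sum, ← Finset.sum_add_distrib]
      apply Finset.sum_le_sum
      intro i _
      have := hrec i
      have : q (i + 1) ≤ γ * q i + c * (a / Real.sqrt (i + 1)) := hrec i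
      calc q (i+1) ≤ γ * q i + c * (a / Real.sqrt (i + 1)) := hrec i
        _ = γ * q i + c * a * (1 / Real.sqrt (i + 1)) := by ring
    have hss := sum_inv_sqrt_le (t - 1)
    have hca : 0 ≤ c * a := mul_nonneg hc ha.le
    nlinarith [mul_le_mul_of_nonneg_left hss hca]
  have hsqrt_mono : Real.sqrt ((t:ℝ) - 1) ≤ Real.sqrt t := by
    apply Real.sqrt_le_sqrt; linarith
  have hcast : ((t - 1 : ℕ) : ℝ) = (t : ℝ) - 1 := by
    have : (1:ℕ) ≤ t := ht
    push_cast [Nat.cast_sub this]; ring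
  have hmain : (1 - γ) * S t ≤ q 0 + 2 * c * a * Real.sqrt t := by
    have h1 : γ * S (t-1) ≤ γ * S t := mul_le_mul_of_nonneg_left hSmono hγ0
    have h2 : c * a * (2 * Real.sqrt ((t - 1 : ℕ) : ℝ)) ≤ 2 * c * a * Real.sqrt t := by
      rw [hcast]
      nlinarith [mul_nonneg hc ha.le, Real.sqrt_nonneg ((t:ℝ) - 1)]
    nlinarith
  have htpos : (0:ℝ) < t := by exact_mod_cast ht
  have hsq : Real.sqrt t * Real.sqrt t = (t:ℝ) := Real.mul_self_sqrt htpos.le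
  have hsqpos : (0:ℝ) < Real.sqrt t := Real.sqrt_pos.mpr htpos
  have e1 : 2 * c * a / ((1 - γ) * Real.sqrt t) =
      2 * c * a * Real.sqrt t / ((1 - γ) * (t : ℝ)) := by
    field_simp; linear_combination (-c) * hsq
  calc (1 / (t:ℝ)) * S t = S t / t := by ring
    _ ≤ (q 0 + 2 * c * a * Real.sqrt t) / ((1 - γ) * t) := by
        rw [div_le_div_iff₀ htpos (by positivity)]
        nlinarith [mul_le_mul_of_nonneg_right hmain htpos.le]
    _ = 2 * c * a * Real.sqrt t / ((1 - γ) * (t:ℝ)) + q 0 / ((1 - γ) * t) := by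
        rw [← add_div, add_comm]
    _ = 2 * c * a / ((1 - γ) * Real.sqrt t) + q 0 / ((1 - γ) * t) := by rw [e1]
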